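/- Let H be a Hopf algebra over a commutative ring k and X a (left-left) Hopf module over H, i.e. a left H-module and left H-comodule with δ(h·x) = h₍₁₎ x₍₋₁₎ ⊗ h₍₂₎·x₍₀₎. Then Π(x) = S(x₍₋₁₎)·x₍₀₎ is an idempotent endomorphism of X whose image is contained in the submodule of left coinvariants {x ∈ X : δ(x) = 1 ⊗ x}, and the multiplication map H ⊗ Xᶜᵒ → X, h ⊗ x ↦ h·x, is an isomorphism of Hopf modules (the fundamental theorem of Hopf modules). -/

import Mathlib

open TensorProduct

noncomputable section

universe u

/-- A finite-sum representation of an element of a tensor product. -/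
structure TRepr (R : Type u) [CommRing R] {M N : Type u} [AddCommGroup M] [Module R M]
    [AddCommGroup N] [Module R N] (t : M ⊗[R] N) where
  ι : Type u
  index : Finset ι
  fst : ι → M
  snd : ι → N
  eq : ∑ i ∈ index, fst i ⊗ₜ[R] snd i = t

section Defs

variable (R : Type u) [CommRing R] (H : Type u) [Ring H] [HopfAlgebra R H]

/-- The comultiplication of `H` as a linear map. -/
def Δm : H →ₗ[R] H ⊗[R] H := Coalgebra.comul

/-- The counit of `H`. -/
def εm : H →ₗ[R] R := Coalgebra.counit

/-- The antipode of `H`. -/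
def Sm : H →ₗ[R] H := HopfAlgebra.antipode (R := R) (A := H)

/-- The multiplication of `H` as a linear map on the tensor square. -/
def mm : H ⊗[R] H →ₗ[R] H := LinearMap.mul' R H

/-- A right-right Yetter–Drinfeld (crossed) module over the Hopf algebra `H`:
a right `H`-module and right `H`-comodule `X` satisfying the compatibility
`δ(x ◁ h) = (x₍₀₎ ◁ h₍₂₎) ⊗ S(h₍₁₎) x₍₁₎ h₍₃₎` (stated for every Sweedler
representation of the iterated comultiplication of `h` and of the coaction of `x`). -/
structure YD (X : Type u) [AddCommGroup X] [Module R X] where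
  act : X ⊗[R] H →ₗ[R] X
  coact : X →ₗ[R] X ⊗[R] H
  act_one : ∀ x : X, act (x ⊗ₜ[R] 1) = x
  act_mul : ∀ (x : X) (g h : H), act (x ⊗ₜ[R] (g * h)) = act (act (x ⊗ₜ[R] g) ⊗ₜ[R] h)
  coact_counit : ∀ x : X,
    (TensorProduct.rid R X) ((LinearMap.lTensor X (εm R H)) (coact x)) = x
  coact_coassoc : (TensorProduct.assoc R X H H).toLinearMap ∘ₗ
      LinearMap.rTensor H coact ∘ₗ coact = LinearMap.lTensor X (Δm R H) ∘ₗ coact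
  compat : ∀ (x : X) (h : H) {ι : Type*} (r : Coalgebra.Repr R h ι)
      {κ : ι → Type*} (r' : (i : ι) → Coalgebra.Repr R (r.right i) (κ i)) (c : TRepr R (coact x)),
      coact (act (x ⊗ₜ[R] h)) =
        ∑ i ∈ r.index, ∑ j ∈ (r' i).index, ∑ k ∈ c.index,
          act (c.fst k ⊗ₜ[R] (r' i).left j) ⊗ₜ[R]
            (Sm R H (r.left i) * c.snd k * (r' i).right j)

/-- A right `H`-module structure on `X` (action written as a linear map on `X ⊗ H`). -/
structure MAct (X : Type u) [AddCommGroup X] [Module R X] where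
  act : X ⊗[R] H →ₗ[R] X
  act_one : ∀ x : X, act (x ⊗ₜ[R] 1) = x
  act_mul : ∀ (x : X) (g h : H), act (x ⊗ₜ[R] (g * h)) = act (act (x ⊗ₜ[R] g) ⊗ₜ[R] h)

end Defs

section Maps

variable {R : Type u} [CommRing R] {H : Type u} [Ring H] [HopfAlgebra R H]
variable {X Y Z : Type u} [AddCommGroup X] [Module R X] [AddCommGroup Y] [Module R Y]
  [AddCommGroup Z] [Module R Z]

/-- The diagonal (tensor product) right action of `H` on `X ⊗ Y`:
`(x ⊗ y) ◁ h = (x ◁ h₍₁₎) ⊗ (y ◁ h₍₂₎)`. -/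
def dAct (aX : X ⊗[R] H →ₗ[R] X) (aY : Y ⊗[R] H →ₗ[R] Y) :
    (X ⊗[R] Y) ⊗[R] H →ₗ[R] X ⊗[R] Y :=
  TensorProduct.map aX aY ∘ₗ (TensorProduct.tensorTensorTensorComm R X Y H H).toLinearMap ∘ₗ
    LinearMap.lTensor (X ⊗[R] Y) (Δm R H)

/-- The codiagonal right coaction of `H` on `X ⊗ Y`:
`δ(x ⊗ y) = (x₍₀₎ ⊗ y₍₀₎) ⊗ y₍₁₎ x₍₁₎`. -/
def cCoact (cX : X →ₗ[R] X ⊗[R] H) (cY : Y →ₗ[R] Y ⊗[R] H) :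
    X ⊗[R] Y →ₗ[R] (X ⊗[R] Y) ⊗[R] H :=
  LinearMap.lTensor (X ⊗[R] Y) (mm R H ∘ₗ (TensorProduct.comm R H H).toLinearMap) ∘ₗ
    (TensorProduct.tensorTensorTensorComm R X H Y H).toLinearMap ∘ₗ TensorProduct.map cX cY

/-- The Yetter–Drinfeld braiding `Ψ(x ⊗ y) = y₍₀₎ ⊗ (x ◁ y₍₁₎)`. -/
def braid (aX : X ⊗[R] H →ₗ[R] X) (cY : Y →ₗ[R] Y ⊗[R] H) :
    X ⊗[R] Y →ₗ[R] Y ⊗[R] X :=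
  LinearMap.lTensor Y aX ∘ₗ (TensorProduct.assoc R Y X H).toLinearMap ∘ₗ
    LinearMap.rTensor H (TensorProduct.comm R X Y).toLinearMap ∘ₗ
    (TensorProduct.assoc R X Y H).symm.toLinearMap ∘ₗ LinearMap.lTensor X cY

/-- The candidate inverse braiding `Ψ⁻¹(y ⊗ x) = (x ◁ S'(y₍₁₎)) ⊗ y₍₀₎`
built from a map `S'` (intended to be the inverse of the antipode). -/
def braidInv (aX : X ⊗[R] H →ₗ[R] X) (cY : Y →ₗ[R] Y ⊗[R] H) (S' : H →ₗ[R] H) :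
    Y ⊗[R] X →ₗ[R] X ⊗[R] Y :=
  LinearMap.rTensor Y aX ∘ₗ (TensorProduct.comm R Y (X ⊗[R] H)).toLinearMap ∘ₗ
    LinearMap.lTensor Y (TensorProduct.comm R H X).toLinearMap ∘ₗ
    (TensorProduct.assoc R Y H X).toLinearMap ∘ₗ
    LinearMap.rTensor X (LinearMap.lTensor Y S') ∘ₗ LinearMap.rTensor X cY

/-- The square antipode `σ(x) = x₍₀₎ ◁ S(x₍₁₎)` of a crossed module. -/
def sqAnt (aX : X ⊗[R] H →ₗ[R] X) (cX : X →ₗ[R] X ⊗[R] H) : X →ₗ[R] X :=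
  aX ∘ₗ LinearMap.lTensor X (Sm R H) ∘ₗ cX

end Maps

section LeftDefs

variable (R : Type u) [CommRing R] (H : Type u) [Ring H] [HopfAlgebra R H]

/-- A left-left Hopf module over `H`: a left `H`-module and left `H`-comodule with
`δ(h·x) = h₍₁₎ x₍₋₁₎ ⊗ (h₍₂₎ · x₍₀₎)`. -/
structure HopfMod (X : Type u) [AddCommGroup X] [Module R X] where
  lact : H ⊗[R] X →ₗ[R] X
  lcoact : X →ₗ[R] H ⊗[R] X
  one_lact : ∀ x : X, lact ((1 : H) ⊗ₜ[R] x) = x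
  mul_lact : ∀ (g h : H) (x : X),
    lact ((g * h) ⊗ₜ[R] x) = lact (g ⊗ₜ[R] lact (h ⊗ₜ[R] x))
  counit_lcoact : ∀ x : X,
    (TensorProduct.lid R X) ((LinearMap.rTensor X (εm R H)) (lcoact x)) = x
  coassoc : (TensorProduct.assoc R H H X).toLinearMap ∘ₗ
      LinearMap.rTensor X (Δm R H) ∘ₗ lcoact = LinearMap.lTensor H lcoact ∘ₗ lcoact
  compat : lcoact ∘ₗ lact =
    TensorProduct.map (mm R H) lact ∘ₗ
      (TensorProduct.tensorTensorTensorComm R H H H X).toLinearMap ∘ₗ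
      TensorProduct.map (Δm R H) lcoact

/-- A left `H`-module structure (action as a linear map on `H ⊗ Y`). -/
structure LMod (Y : Type u) [AddCommGroup Y] [Module R Y] where
  a : H ⊗[R] Y →ₗ[R] Y
  one : ∀ y : Y, a ((1 : H) ⊗ₜ[R] y) = y
  mul : ∀ (g h : H) (y : Y), a ((g * h) ⊗ₜ[R] y) = a (g ⊗ₜ[R] a (h ⊗ₜ[R] y))

variable {R H}

variable {B C : Type u} [AddCommGroup B] [Module R B] [AddCommGroup C] [Module R C]

/-- The diagonal left action of `H` on `B ⊗ C`: `h ▷ (b ⊗ c) = (h₍₁₎ ▷ b) ⊗ (h₍₂₎ ▷ c)`. -/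
def dLAct (aB : H ⊗[R] B →ₗ[R] B) (aC : H ⊗[R] C →ₗ[R] C) :
    H ⊗[R] (B ⊗[R] C) →ₗ[R] B ⊗[R] C :=
  TensorProduct.map aB aC ∘ₗ (TensorProduct.tensorTensorTensorComm R H H B C).toLinearMap ∘ₗ
    LinearMap.rTensor (B ⊗[R] C) (Δm R H)

/-- The codiagonal left coaction of `H` on `B ⊗ C`: `δ(b ⊗ c) = b₍₋₁₎ c₍₋₁₎ ⊗ (b₍₀₎ ⊗ c₍₀₎)`. -/
def cLCoact (cB : B →ₗ[R] H ⊗[R] B) (cC : C →ₗ[R] H ⊗[R] C) :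
    B ⊗[R] C →ₗ[R] H ⊗[R] (B ⊗[R] C) :=
  LinearMap.rTensor (B ⊗[R] C) (mm R H) ∘ₗ
    (TensorProduct.tensorTensorTensorComm R H B H C).toLinearMap ∘ₗ TensorProduct.map cB cC

/-- The left Yetter–Drinfeld braiding `Ψ(b ⊗ c) = (b₍₋₁₎ ▷ c) ⊗ b₍₀₎`. -/
def lbraid (cB : B →ₗ[R] H ⊗[R] B) (aC : H ⊗[R] C →ₗ[R] C) :
    B ⊗[R] C →ₗ[R] C ⊗[R] B :=
  LinearMap.rTensor B aC ∘ₗ (TensorProduct.assoc R H C B).symm.toLinearMap ∘ₗ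
    LinearMap.lTensor H (TensorProduct.comm R B C).toLinearMap ∘ₗ
    (TensorProduct.assoc R H B C).toLinearMap ∘ₗ LinearMap.rTensor C cB

/-- A left-left Yetter–Drinfeld (crossed) module over `H`:
a left `H`-module and left `H`-comodule with
`h₍₁₎ b₍₋₁₎ ⊗ (h₍₂₎ ▷ b₍₀₎) = (h₍₁₎ ▷ b)₍₋₁₎ h₍₂₎ ⊗ (h₍₁₎ ▷ b)₍₀₎`. -/
structure LYD (R : Type u) [CommRing R] (H : Type u) [Ring H] [HopfAlgebra R H]
    (B : Type u) [AddCommGroup B] [Module R B] where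
  lact : H ⊗[R] B →ₗ[R] B
  lcoact : B →ₗ[R] H ⊗[R] B
  one_lact : ∀ b : B, lact ((1 : H) ⊗ₜ[R] b) = b
  mul_lact : ∀ (g h : H) (b : B),
    lact ((g * h) ⊗ₜ[R] b) = lact (g ⊗ₜ[R] lact (h ⊗ₜ[R] b))
  counit_lcoact : ∀ b : B,
    (TensorProduct.lid R B) ((LinearMap.rTensor B (εm R H)) (lcoact b)) = b
  coassoc : (TensorProduct.assoc R H H B).toLinearMap ∘ₗ
      LinearMap.rTensor B (Δm R H) ∘ₗ lcoact = LinearMap.lTensor H lcoact ∘ₗ lcoact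
  compat :
    TensorProduct.map (mm R H) lact ∘ₗ
        (TensorProduct.tensorTensorTensorComm R H H H B).toLinearMap ∘ₗ
        TensorProduct.map (Δm R H) lcoact =
      LinearMap.rTensor B (mm R H) ∘ₗ
        (TensorProduct.assoc R H H B).symm.toLinearMap ∘ₗ
        LinearMap.lTensor H (TensorProduct.comm R B H).toLinearMap ∘ₗ
        (TensorProduct.assoc R H B H).toLinearMap ∘ₗ
        LinearMap.rTensor H lcoact ∘ₗ LinearMap.rTensor H lact ∘ₗ
        (TensorProduct.assoc R H B H).symm.toLinearMap ∘ₗ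
        LinearMap.lTensor H (TensorProduct.comm R H B).toLinearMap ∘ₗ
        (TensorProduct.assoc R H H B).toLinearMap ∘ₗ
        LinearMap.rTensor B (Δm R H)

/-- The smash (cross) product multiplication on `B ⊗ H`:
`(b ⊗ h)(b' ⊗ h') = b (h₍₁₎ ▷ b') ⊗ h₍₂₎ h'`. -/
def smashMul (mB : B ⊗[R] B →ₗ[R] B) (aB : H ⊗[R] B →ₗ[R] B) :
    (B ⊗[R] H) ⊗[R] (B ⊗[R] H) →ₗ[R] B ⊗[R] H :=
  LinearMap.rTensor H mB ∘ₗ (TensorProduct.assoc R B B H).symm.toLinearMap ∘ₗ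
    LinearMap.lTensor B
      (TensorProduct.map aB (mm R H) ∘ₗ
        (TensorProduct.tensorTensorTensorComm R H H B H).toLinearMap ∘ₗ
        LinearMap.rTensor (B ⊗[R] H) (Δm R H)) ∘ₗ
    (TensorProduct.assoc R B H (B ⊗[R] H)).toLinearMap

/-- The smash (cross) coproduct comultiplication on `B ⊗ H`:
`Δ(b ⊗ h) = (b₍₁₎ ⊗ (b₍₂₎)₍₋₁₎ h₍₁₎) ⊗ ((b₍₂₎)₍₀₎ ⊗ h₍₂₎)`. -/
def smashComul (cmB : B →ₗ[R] B ⊗[R] B) (cB : B →ₗ[R] H ⊗[R] B) :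
    B ⊗[R] H →ₗ[R] (B ⊗[R] H) ⊗[R] (B ⊗[R] H) :=
  LinearMap.rTensor (B ⊗[R] H)
      (LinearMap.lTensor B (mm R H ∘ₗ (TensorProduct.comm R H H).toLinearMap) ∘ₗ
        (TensorProduct.assoc R B H H).toLinearMap) ∘ₗ
    (TensorProduct.assoc R (B ⊗[R] H) H (B ⊗[R] H)).symm.toLinearMap ∘ₗ
    LinearMap.lTensor (B ⊗[R] H) (TensorProduct.assoc R H B H).toLinearMap ∘ₗ
    (TensorProduct.tensorTensorTensorComm R B (H ⊗[R] B) H H).toLinearMap ∘ₗ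
    LinearMap.rTensor (H ⊗[R] H) (LinearMap.lTensor B cB) ∘ₗ
    TensorProduct.map cmB (Δm R H)

/-- The counit of the smash product: `ε(b ⊗ h) = ε_B(b) ε_H(h)`. -/
def smashCounit (ctB : B →ₗ[R] R) : B ⊗[R] H →ₗ[R] R :=
  LinearMap.mul' R R ∘ₗ TensorProduct.map ctB (εm R H)

/-- The antipode of the smash product:
`S(b ⊗ h) = (1 ⊗ S_H(b₍₋₁₎ h)) · (S_B(b₍₀₎) ⊗ 1)`. -/
def smashAnt (mB : B ⊗[R] B →ₗ[R] B) (aB : H ⊗[R] B →ₗ[R] B)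
    (antB : B →ₗ[R] B) (cB : B →ₗ[R] H ⊗[R] B) (oneB : B) :
    B ⊗[R] H →ₗ[R] B ⊗[R] H :=
  smashMul mB aB ∘ₗ
    TensorProduct.map (TensorProduct.mk R B H oneB) ((TensorProduct.mk R B H).flip 1) ∘ₗ
    TensorProduct.map (Sm R H ∘ₗ mm R H) antB ∘ₗ
    (TensorProduct.assoc R H H B).symm.toLinearMap ∘ₗ
    LinearMap.lTensor H (TensorProduct.comm R B H).toLinearMap ∘ₗ
    (TensorProduct.assoc R H B H).toLinearMap ∘ₗ
    LinearMap.rTensor H cB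

/-- A Hopf algebra `B` in the braided category of left-left Yetter–Drinfeld modules
over `H` (a braided Hopf algebra): `B` carries an algebra and a coalgebra structure,
all structure maps are morphisms of Yetter–Drinfeld modules, the comultiplication is
an algebra map with respect to the braided tensor product (the braiding
`Ψ(a ⊗ b) = (a₍₋₁₎ ▷ b) ⊗ a₍₀₎` appearing in the middle), and the antipode is a
convolution inverse of the identity. -/
structure BHopf (R : Type u) [CommRing R] (H : Type u) [Ring H] [HopfAlgebra R H]
    (B : Type u) [AddCommGroup B] [Module R B] (T : LYD R H B) where
  mulB : B ⊗[R] B →ₗ[R] B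
  oneB : B
  comulB : B →ₗ[R] B ⊗[R] B
  counitB : B →ₗ[R] R
  antB : B →ₗ[R] B
  mul_assoc : mulB ∘ₗ LinearMap.rTensor B mulB =
    mulB ∘ₗ LinearMap.lTensor B mulB ∘ₗ (TensorProduct.assoc R B B B).toLinearMap
  one_mul : ∀ b : B, mulB (oneB ⊗ₜ[R] b) = b
  mul_one : ∀ b : B, mulB (b ⊗ₜ[R] oneB) = b
  coassoc : (TensorProduct.assoc R B B B).toLinearMap ∘ₗ
      LinearMap.rTensor B comulB ∘ₗ comulB = LinearMap.lTensor B comulB ∘ₗ comulB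
  counit_left : ∀ b : B, (TensorProduct.lid R B) ((LinearMap.rTensor B counitB) (comulB b)) = b
  counit_right : ∀ b : B, (TensorProduct.rid R B) ((LinearMap.lTensor B counitB) (comulB b)) = b
  mulB_linear : mulB ∘ₗ dLAct T.lact T.lact = T.lact ∘ₗ LinearMap.lTensor H mulB
  mulB_colinear : T.lcoact ∘ₗ mulB = LinearMap.lTensor H mulB ∘ₗ cLCoact T.lcoact T.lcoact
  oneB_inv : ∀ h : H, T.lact (h ⊗ₜ[R] oneB) = εm R H h • oneB
  oneB_coinv : T.lcoact oneB = (1 : H) ⊗ₜ[R] oneB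
  comulB_linear : comulB ∘ₗ T.lact = dLAct T.lact T.lact ∘ₗ LinearMap.lTensor H comulB
  comulB_colinear : cLCoact T.lcoact T.lcoact ∘ₗ comulB = LinearMap.lTensor H comulB ∘ₗ T.lcoact
  counitB_linear : ∀ (h : H) (b : B), counitB (T.lact (h ⊗ₜ[R] b)) = εm R H h * counitB b
  counitB_colinear : ∀ b : B,
    (LinearMap.lTensor H counitB) (T.lcoact b) = (1 : H) ⊗ₜ[R] counitB b
  braided_bialg : comulB ∘ₗ mulB =
    TensorProduct.map mulB mulB ∘ₗ
      (TensorProduct.assoc R B B (B ⊗[R] B)).symm.toLinearMap ∘ₗ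
      LinearMap.lTensor B (TensorProduct.assoc R B B B).toLinearMap ∘ₗ
      LinearMap.lTensor B (LinearMap.rTensor B (lbraid T.lcoact T.lact)) ∘ₗ
      LinearMap.lTensor B (TensorProduct.assoc R B B B).symm.toLinearMap ∘ₗ
      (TensorProduct.assoc R B B (B ⊗[R] B)).toLinearMap ∘ₗ
      TensorProduct.map comulB comulB
  comulB_one : comulB oneB = oneB ⊗ₜ[R] oneB
  counitB_mul : ∀ a b : B, counitB (mulB (a ⊗ₜ[R] b)) = counitB a * counitB b
  counitB_one : counitB oneB = 1
  antB_left : ∀ b : B, mulB ((LinearMap.rTensor B antB) (comulB b)) = counitB b • oneB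
  antB_right : ∀ b : B, mulB ((LinearMap.lTensor B antB) (comulB b)) = counitB b • oneB

end LeftDefs

section AuxFTHM
open Coalgebra LinearMap HopfAlgebra

section ConvDef
variable {R : Type u} [CommRing R] {H : Type u} [Ring H] [HopfAlgebra R H]
variable {C : Type u} [Ring C] [Algebra R C]

noncomputable def conv (f g : H →ₗ[R] C) : H →ₗ[R] C :=
  LinearMap.mul' R C ∘ₗ TensorProduct.map f g ∘ₗ Coalgebra.comul

lemma conv_repr (f g : H →ₗ[R] C) (a : H) {ι : Type*} (r : Coalgebra.Repr R a ι) :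
    conv f g a = ∑ i ∈ r.index, f (r.left i) * g (r.right i) := by
  simp [conv, ← r.eq, map_sum]

lemma sum_counit_smul_right {a : H} {ι : Type*} (r : Coalgebra.Repr R a ι) :
    ∑ i ∈ r.index, Coalgebra.counit (R := R) (r.right i) • r.left i = a := by
  have h := Coalgebra.sum_tmul_counit_eq (R := R) r
  have := congrArg (TensorProduct.rid R H) h
  rw [map_sum] at this
  simp only [TensorProduct.rid_tmul, one_smul] at this
  exact this

lemma sum_counit_smul_left {a : H} {ι : Type*} (r : Coalgebra.Repr R a ι) :
    ∑ i ∈ r.index, Coalgebra.counit (R := R) (r.left i) • r.right i = a := by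
  have h := Coalgebra.sum_counit_tmul_eq (R := R) r
  have := congrArg (TensorProduct.lid R H) h
  rw [map_sum] at this
  simp only [TensorProduct.lid_tmul, one_smul] at this
  exact this

lemma conv_assoc (f g h : H →ₗ[R] C) : conv (conv f g) h = conv f (conv g h) := by
  ext a
  set r := ℛ R a with hr
  set rl : (i : r.ι) → Coalgebra.Repr R (r.left i) (H × H) := fun i => ℛ R (r.left i) with hrl
  set rr : (i : r.ι) → Coalgebra.Repr R (r.right i) (H × H) := fun i => ℛ R (r.right i) with hrr
  have key := congrArg (LinearMap.mul' R C ∘ₗ TensorProduct.map f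
      (LinearMap.mul' R C ∘ₗ TensorProduct.map g h)) (Coalgebra.sum_tmul_tmul_eq r rl rr)
  simp only [map_sum, LinearMap.coe_comp, Function.comp_apply, TensorProduct.map_tmul,
    LinearMap.mul'_apply] at key
  calc conv (conv f g) h a
      = ∑ i ∈ r.index, conv f g (r.left i) * h (r.right i) := conv_repr _ _ _ r
    _ = ∑ i ∈ r.index, ∑ j ∈ (rl i).index,
          f ((rl i).left j) * (g ((rl i).right j) * h (r.right i)) := by
        refine Finset.sum_congr rfl fun i _ => ?_
        rw [conv_repr _ _ _ (rl i), Finset.sum_mul]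
        exact Finset.sum_congr rfl fun j _ => by rw [mul_assoc]
    _ = ∑ i ∈ r.index, ∑ j ∈ (rr i).index,
          f (r.left i) * (g ((rr i).left j) * h ((rr i).right j)) := key
    _ = conv f (conv g h) a := by
        rw [conv_repr _ _ _ r]
        refine Finset.sum_congr rfl fun i _ => ?_
        rw [conv_repr _ _ _ (rr i), Finset.mul_sum]

noncomputable def etaEps : H →ₗ[R] C := Algebra.linearMap R C ∘ₗ Coalgebra.counit

lemma etaEps_apply (a : H) : (etaEps (R := R) (H := H) (C := C)) a =
    Coalgebra.counit (R := R) a • 1 := by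
  simp [etaEps, Algebra.algebraMap_eq_smul_one]

lemma conv_etaEps_left (f : H →ₗ[R] C) : conv etaEps f = f := by
  ext a
  rw [conv_repr _ _ _ (ℛ R a)]
  calc ∑ i ∈ (ℛ R a).index, etaEps ((ℛ R a).left i) * f ((ℛ R a).right i)
      = ∑ i ∈ (ℛ R a).index, f (Coalgebra.counit (R := R) ((ℛ R a).left i) • (ℛ R a).right i) := by
        refine Finset.sum_congr rfl fun i _ => ?_
        rw [map_smul, etaEps, LinearMap.comp_apply, Algebra.linearMap_apply,
          ← Algebra.smul_def]
    _ = f a := by rw [← map_sum, sum_counit_smul_left]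

lemma conv_etaEps_right (f : H →ₗ[R] C) : conv f etaEps = f := by
  ext a
  rw [conv_repr _ _ _ (ℛ R a)]
  calc ∑ i ∈ (ℛ R a).index, f ((ℛ R a).left i) * etaEps ((ℛ R a).right i)
      = ∑ i ∈ (ℛ R a).index, f (Coalgebra.counit (R := R) ((ℛ R a).right i) • (ℛ R a).left i) := by
        refine Finset.sum_congr rfl fun i _ => ?_
        rw [map_smul, etaEps, LinearMap.comp_apply, Algebra.linearMap_apply,
          Algebra.smul_def, Algebra.commutes]
    _ = f a := by rw [← map_sum, sum_counit_smul_right]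

end ConvDef

section Anti
variable {R : Type u} [CommRing R] {H : Type u} [Ring H] [HopfAlgebra R H]

lemma conv_DG (a : H) :
    conv (Coalgebra.comul (R := R) (A := H))
      (TensorProduct.map (antipode (R := R)) (antipode (R := R)) ∘ₗ
        (TensorProduct.comm R H H).toLinearMap ∘ₗ Coalgebra.comul) a
      = Coalgebra.counit (R := R) a • 1 := by
  set S : H →ₗ[R] H := antipode (R := R) with hS
  set r := ℛ R a with hr
  set rl : (i : r.ι) → Coalgebra.Repr R (r.left i) (H × H) := fun i => ℛ R (r.left i) with hrl
  set rr : (i : r.ι) → Coalgebra.Repr R (r.right i) (H × H) := fun i => ℛ R (r.right i) with hrr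
  have stepA : conv (Coalgebra.comul (R := R) (A := H))
      (TensorProduct.map S S ∘ₗ (TensorProduct.comm R H H).toLinearMap ∘ₗ Coalgebra.comul) a
      = ∑ i ∈ r.index, ∑ j ∈ (rr i).index,
          Coalgebra.comul (R := R) (r.left i) * (S ((rr i).right j) ⊗ₜ[R] S ((rr i).left j)) := by
    rw [conv_repr _ _ _ r]
    refine Finset.sum_congr rfl fun i _ => ?_
    have hG : (TensorProduct.map S S ∘ₗ (TensorProduct.comm R H H).toLinearMap ∘ₗ
        Coalgebra.comul) (r.right i)
        = ∑ j ∈ (rr i).index, S ((rr i).right j) ⊗ₜ[R] S ((rr i).left j) := by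
      rw [LinearMap.comp_apply, LinearMap.comp_apply, LinearEquiv.coe_coe, ← (rr i).eq, map_sum,
        map_sum]
      simp only [TensorProduct.comm_tmul, TensorProduct.map_tmul]
    rw [hG, Finset.mul_sum]
  have keyB := congrArg (LinearMap.mul' R (H ⊗[R] H) ∘ₗ TensorProduct.map Coalgebra.comul
      (TensorProduct.map S S ∘ₗ (TensorProduct.comm R H H).toLinearMap))
    (Coalgebra.sum_tmul_tmul_eq r rl rr)
  simp only [map_sum, LinearMap.coe_comp, Function.comp_apply, TensorProduct.map_tmul,
    LinearEquiv.coe_coe, TensorProduct.comm_tmul, LinearMap.mul'_apply] at keyB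
  have stepC : ∀ i ∈ r.index,
      ∑ j ∈ (rl i).index,
        Coalgebra.comul (R := R) ((rl i).left j) * (S (r.right i) ⊗ₜ[R] S ((rl i).right j))
      = (r.left i * S (r.right i)) ⊗ₜ[R] 1 := by
    intro i _
    set si : (j : (rl i).ι) → Coalgebra.Repr R ((rl i).left j) (H × H) :=
      fun j => ℛ R ((rl i).left j) with hsi
    set ti : (j : (rl i).ι) → Coalgebra.Repr R ((rl i).right j) (H × H) :=
      fun j => ℛ R ((rl i).right j) with hti
    have keyC := congrArg (TensorProduct.map (LinearMap.mulRight R (S (r.right i)))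
        (LinearMap.mul' R H ∘ₗ LinearMap.lTensor H S))
      (Coalgebra.sum_tmul_tmul_eq (rl i) si ti)
    simp only [map_sum, TensorProduct.map_tmul, LinearMap.coe_comp, Function.comp_apply,
      LinearMap.lTensor_tmul, LinearMap.mul'_apply, LinearMap.mulRight_apply] at keyC
    calc ∑ j ∈ (rl i).index,
          Coalgebra.comul (R := R) ((rl i).left j) * (S (r.right i) ⊗ₜ[R] S ((rl i).right j))
        = ∑ j ∈ (rl i).index, ∑ k ∈ (si j).index,
            ((si j).left k * S (r.right i)) ⊗ₜ[R] ((si j).right k * S ((rl i).right j)) := by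
          refine Finset.sum_congr rfl fun j _ => ?_
          rw [← (si j).eq, Finset.sum_mul]
          exact Finset.sum_congr rfl fun k _ => Algebra.TensorProduct.tmul_mul_tmul _ _ _ _
      _ = ∑ j ∈ (rl i).index, ∑ k ∈ (ti j).index,
            ((rl i).left j * S (r.right i)) ⊗ₜ[R] ((ti j).left k * S ((ti j).right k)) := keyC
      _ = ∑ j ∈ (rl i).index,
            (Coalgebra.counit (R := R) ((rl i).right j)) •
              (((rl i).left j * S (r.right i)) ⊗ₜ[R] (1 : H)) := by
          refine Finset.sum_congr rfl fun j _ => ?_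
          rw [← TensorProduct.tmul_sum, sum_mul_antipode_eq_smul (ti j), TensorProduct.tmul_smul]
      _ = ∑ j ∈ (rl i).index,
            ((Coalgebra.counit (R := R) ((rl i).right j) • (rl i).left j) * S (r.right i))
              ⊗ₜ[R] (1 : H) := by
          refine Finset.sum_congr rfl fun j _ => ?_
          rw [TensorProduct.smul_tmul', smul_mul_assoc]
      _ = (r.left i * S (r.right i)) ⊗ₜ[R] 1 := by
          rw [← TensorProduct.sum_tmul, ← Finset.sum_mul, sum_counit_smul_right (rl i)]
  calc conv (Coalgebra.comul (R := R) (A := H))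
        (TensorProduct.map S S ∘ₗ (TensorProduct.comm R H H).toLinearMap ∘ₗ Coalgebra.comul) a
      = ∑ i ∈ r.index, (r.left i * S (r.right i)) ⊗ₜ[R] (1 : H) := by
        rw [stepA, ← keyB]; exact Finset.sum_congr rfl stepC
    _ = (∑ i ∈ r.index, r.left i * S (r.right i)) ⊗ₜ[R] (1 : H) := by
        rw [← TensorProduct.sum_tmul]
    _ = Coalgebra.counit (R := R) a • (1 : H ⊗[R] H) := by
        rw [sum_mul_antipode_eq_smul r, ← TensorProduct.smul_tmul',
          ← Algebra.TensorProduct.one_def]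

lemma conv_FD (a : H) :
    conv (Coalgebra.comul (R := R) (A := H) ∘ₗ antipode (R := R))
      (Coalgebra.comul (R := R) (A := H)) a = Coalgebra.counit (R := R) a • 1 := by
  set r := ℛ R a with hr
  rw [conv_repr _ _ _ r]
  calc ∑ i ∈ r.index,
        (Coalgebra.comul (R := R) (A := H) ∘ₗ antipode (R := R)) (r.left i) *
          Coalgebra.comul (R := R) (r.right i)
      = ∑ i ∈ r.index, Coalgebra.comul (R := R) (antipode (R := R) (r.left i) * r.right i) := by
        refine Finset.sum_congr rfl fun i _ => ?_
        rw [LinearMap.comp_apply, Bialgebra.comul_mul]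
    _ = Coalgebra.comul (R := R) (∑ i ∈ r.index, antipode (R := R) (r.left i) * r.right i) := by
        rw [map_sum]
    _ = Coalgebra.counit (R := R) a • 1 := by
        rw [sum_antipode_mul_eq_smul r, map_smul, Bialgebra.comul_one]

theorem antipode_comul_eq :
    Coalgebra.comul (R := R) (A := H) ∘ₗ antipode (R := R) =
      TensorProduct.map (antipode (R := R)) (antipode (R := R)) ∘ₗ
        (TensorProduct.comm R H H).toLinearMap ∘ₗ Coalgebra.comul := by
  have hFD : conv (Coalgebra.comul (R := R) (A := H) ∘ₗ antipode (R := R))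
      (Coalgebra.comul (R := R) (A := H)) = etaEps := by
    ext a; rw [conv_FD, etaEps_apply]
  have hDG : conv (Coalgebra.comul (R := R) (A := H))
      (TensorProduct.map (antipode (R := R)) (antipode (R := R)) ∘ₗ
        (TensorProduct.comm R H H).toLinearMap ∘ₗ Coalgebra.comul) = etaEps := by
    ext a; rw [conv_DG, etaEps_apply]
  calc Coalgebra.comul (R := R) (A := H) ∘ₗ antipode (R := R)
      = conv (Coalgebra.comul (R := R) (A := H) ∘ₗ antipode (R := R)) etaEps :=
        (conv_etaEps_right _).symm
    _ = conv (Coalgebra.comul (R := R) (A := H) ∘ₗ antipode (R := R))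
        (conv (Coalgebra.comul (R := R) (A := H))
          (TensorProduct.map (antipode (R := R)) (antipode (R := R)) ∘ₗ
            (TensorProduct.comm R H H).toLinearMap ∘ₗ Coalgebra.comul)) := by rw [hDG]
    _ = conv (conv (Coalgebra.comul (R := R) (A := H) ∘ₗ antipode (R := R))
          (Coalgebra.comul (R := R) (A := H)))
        (TensorProduct.map (antipode (R := R)) (antipode (R := R)) ∘ₗ
          (TensorProduct.comm R H H).toLinearMap ∘ₗ Coalgebra.comul) := (conv_assoc _ _ _).symm
    _ = conv etaEps (TensorProduct.map (antipode (R := R)) (antipode (R := R)) ∘ₗ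
          (TensorProduct.comm R H H).toLinearMap ∘ₗ Coalgebra.comul) := by rw [hFD]
    _ = _ := conv_etaEps_left _

/-- `Δ 1 = 1 ⊗ 1` as a `Repr`. -/
noncomputable def oneRepr : Coalgebra.Repr R (1 : H) Unit where
  index := {()}
  left _ := 1
  right _ := 1
  eq := by simp [Bialgebra.comul_one, Algebra.TensorProduct.one_def]

lemma antipode_one' : antipode (R := R) (1 : H) = 1 := by
  have := sum_antipode_mul_eq_smul (R := R) (oneRepr (H := H))
  simpa [oneRepr] using this

end Anti

section HopfModLemmas
variable {R : Type u} [CommRing R] {H : Type u} [Ring H] [HopfAlgebra R H]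
variable {X : Type u} [AddCommGroup X] [Module R X] (T : HopfMod R H X)

lemma Δm_eq : Δm R H = Coalgebra.comul := rfl
lemma εm_eq : εm R H = Coalgebra.counit := rfl
lemma Sm_eq : Sm R H = antipode (R := R) := rfl
lemma mm_eq : mm R H = LinearMap.mul' R H := rfl

/-- A `Repr` of `antipode a` obtained from a `Repr` of `a`. -/
def antipodeRepr {a : H} {ι : Type*} (u : Coalgebra.Repr R a ι) :
    Coalgebra.Repr R (antipode (R := R) a) ι where
  index := u.index
  left k := antipode (R := R) (u.right k)
  right k := antipode (R := R) (u.left k)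
  eq := by
    have h := congr($(antipode_comul_eq (R := R) (H := H)) a)
    rw [LinearMap.comp_apply] at h
    rw [h, LinearMap.comp_apply, LinearMap.comp_apply, LinearEquiv.coe_coe, ← u.eq, map_sum,
      map_sum]
    simp only [TensorProduct.comm_tmul, TensorProduct.map_tmul]

lemma compat_pt (h : H) (x : X) {ι : Type*} (r : Coalgebra.Repr R h ι) (s : Finset (H × X))
    (hs : T.lcoact x = ∑ q ∈ s, q.1 ⊗ₜ[R] q.2) :
    T.lcoact (T.lact (h ⊗ₜ[R] x)) =
      ∑ i ∈ r.index, ∑ q ∈ s, (r.left i * q.1) ⊗ₜ[R] T.lact (r.right i ⊗ₜ[R] q.2) := by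
  have hc := congr($(T.compat) (h ⊗ₜ[R] x))
  rw [LinearMap.comp_apply] at hc
  rw [hc]
  simp only [LinearMap.comp_apply, TensorProduct.map_tmul, LinearEquiv.coe_coe]
  rw [hs, Δm_eq, ← r.eq, TensorProduct.sum_tmul]
  rw [map_sum, map_sum]
  refine Finset.sum_congr rfl fun i _ => ?_
  rw [TensorProduct.tmul_sum, map_sum, map_sum]
  refine Finset.sum_congr rfl fun q _ => ?_
  simp only [TensorProduct.tensorTensorTensorComm_tmul, TensorProduct.map_tmul, mm_eq,
    LinearMap.mul'_apply]

lemma coinv_compat (h : H) (x : X) (hx : T.lcoact x = (1 : H) ⊗ₜ[R] x)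
    {ι : Type*} (r : Coalgebra.Repr R h ι) :
    T.lcoact (T.lact (h ⊗ₜ[R] x)) =
      ∑ i ∈ r.index, r.left i ⊗ₜ[R] T.lact (r.right i ⊗ₜ[R] x) := by
  have := compat_pt T h x r {((1 : H), x)} (by simpa using hx)
  simpa using this

lemma counit_pt (x : X) (s : Finset (H × X)) (hs : T.lcoact x = ∑ q ∈ s, q.1 ⊗ₜ[R] q.2) :
    ∑ q ∈ s, Coalgebra.counit (R := R) q.1 • q.2 = x := by
  have h := T.counit_lcoact x
  rw [hs, map_sum, map_sum] at h
  simp only [εm_eq, LinearMap.rTensor_tmul, TensorProduct.lid_tmul] at h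
  exact h

lemma hopf_coassoc_pt (x : X) (s : Finset (H × X))
    (hs : T.lcoact x = ∑ q ∈ s, q.1 ⊗ₜ[R] q.2) (t : H × X → Finset (H × X))
    (ht : ∀ p ∈ s, T.lcoact p.2 = ∑ q ∈ t p, q.1 ⊗ₜ[R] q.2)
    (u : (p : H × X) → Coalgebra.Repr R p.1 (H × H)) :
    ∑ p ∈ s, ∑ k ∈ (u p).index, (u p).left k ⊗ₜ[R] ((u p).right k ⊗ₜ[R] p.2) =
      ∑ p ∈ s, ∑ q ∈ t p, p.1 ⊗ₜ[R] (q.1 ⊗ₜ[R] q.2) := by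
  have h := congr($(T.coassoc) x)
  simp only [LinearMap.comp_apply, LinearEquiv.coe_coe] at h
  rw [hs, map_sum, map_sum, map_sum] at h
  calc ∑ p ∈ s, ∑ k ∈ (u p).index, (u p).left k ⊗ₜ[R] ((u p).right k ⊗ₜ[R] p.2)
      = ∑ p ∈ s, (TensorProduct.assoc R H H X)
          ((LinearMap.rTensor X (Δm R H)) (p.1 ⊗ₜ[R] p.2)) := by
        refine Finset.sum_congr rfl fun p _ => ?_
        rw [LinearMap.rTensor_tmul, Δm_eq, ← (u p).eq, TensorProduct.sum_tmul, map_sum]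
        simp only [TensorProduct.assoc_tmul]
    _ = ∑ p ∈ s, (LinearMap.lTensor H T.lcoact) (p.1 ⊗ₜ[R] p.2) := h
    _ = ∑ p ∈ s, ∑ q ∈ t p, p.1 ⊗ₜ[R] (q.1 ⊗ₜ[R] q.2) := by
        refine Finset.sum_congr rfl fun p hp => ?_
        rw [LinearMap.lTensor_tmul, ht p hp, TensorProduct.tmul_sum]

lemma Pi_pt (x : X) (s : Finset (H × X)) (hs : T.lcoact x = ∑ q ∈ s, q.1 ⊗ₜ[R] q.2) :
    T.lact ((LinearMap.rTensor X (Sm R H)) (T.lcoact x)) =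
      ∑ p ∈ s, T.lact (antipode (R := R) p.1 ⊗ₜ[R] p.2) := by
  rw [hs, map_sum, map_sum]
  simp only [LinearMap.rTensor_tmul, Sm_eq]

end HopfModLemmas

section PiCoinv
variable {R : Type u} [CommRing R] {H : Type u} [Ring H] [HopfAlgebra R H]
variable {X : Type u} [AddCommGroup X] [Module R X] (T : HopfMod R H X)

/-- The auxiliary operator `a ⊗ (b ⊗ y) ↦ ∑ (S a₍₂₎ b) ⊗ (S a₍₁₎ ▷ y)`. -/
def ThetaOp : H ⊗[R] (H ⊗[R] X) →ₗ[R] H ⊗[R] X :=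
  TensorProduct.map (LinearMap.mul' R H) T.lact ∘ₗ
    (TensorProduct.tensorTensorTensorComm R H H H X).toLinearMap ∘ₗ
    LinearMap.rTensor (H ⊗[R] X)
      (TensorProduct.map (antipode (R := R)) (antipode (R := R)) ∘ₗ
        (TensorProduct.comm R H H).toLinearMap ∘ₗ Coalgebra.comul)

lemma ThetaOp_pt (a b : H) (y : X) {ι : Type*} (u : Coalgebra.Repr R a ι) :
    ThetaOp T (a ⊗ₜ[R] (b ⊗ₜ[R] y)) =
      ∑ k ∈ u.index, (antipode (R := R) (u.right k) * b) ⊗ₜ[R]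
        T.lact (antipode (R := R) (u.left k) ⊗ₜ[R] y) := by
  rw [ThetaOp]
  simp only [LinearMap.comp_apply, LinearEquiv.coe_coe, LinearMap.rTensor_tmul]
  rw [← u.eq, map_sum, map_sum, TensorProduct.sum_tmul, map_sum, map_sum]
  refine Finset.sum_congr rfl fun k _ => ?_
  simp only [TensorProduct.comm_tmul, TensorProduct.map_tmul,
    TensorProduct.tensorTensorTensorComm_tmul, LinearMap.mul'_apply]

lemma ThetaOp_reduce (a : H) (y : X) {ι : Type*} (u : Coalgebra.Repr R a ι) :
    ∑ k ∈ u.index, ThetaOp T ((u.left k) ⊗ₜ[R] ((u.right k) ⊗ₜ[R] y)) =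
      (1 : H) ⊗ₜ[R] T.lact (antipode (R := R) a ⊗ₜ[R] y) := by
  set v : (k : u.ι) → Coalgebra.Repr R (u.left k) (H × H) := fun k => ℛ R (u.left k) with hv
  set w : (k : u.ι) → Coalgebra.Repr R (u.right k) (H × H) := fun k => ℛ R (u.right k) with hw
  have key := congrArg ((TensorProduct.comm R X H).toLinearMap ∘ₗ
      TensorProduct.map (T.lact ∘ₗ ((TensorProduct.mk R H X).flip y) ∘ₗ antipode (R := R))
        (LinearMap.mul' R H ∘ₗ LinearMap.rTensor H (antipode (R := R))))
    (Coalgebra.sum_tmul_tmul_eq u v w)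
  simp only [map_sum, LinearMap.coe_comp, Function.comp_apply, LinearEquiv.coe_coe,
    TensorProduct.map_tmul, LinearMap.rTensor_tmul, LinearMap.mul'_apply,
    TensorProduct.comm_tmul, LinearMap.flip_apply, TensorProduct.mk_apply] at key
  calc ∑ k ∈ u.index, ThetaOp T ((u.left k) ⊗ₜ[R] ((u.right k) ⊗ₜ[R] y))
      = ∑ k ∈ u.index, ∑ m ∈ (v k).index,
          (antipode (R := R) ((v k).right m) * u.right k) ⊗ₜ[R]
            T.lact (antipode (R := R) ((v k).left m) ⊗ₜ[R] y) := by
        exact Finset.sum_congr rfl fun k _ => ThetaOp_pt T _ _ _ (v k)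
    _ = ∑ k ∈ u.index, ∑ m ∈ (w k).index,
          (antipode (R := R) ((w k).left m) * (w k).right m) ⊗ₜ[R]
            T.lact (antipode (R := R) (u.left k) ⊗ₜ[R] y) := key
    _ = ∑ k ∈ u.index, (Coalgebra.counit (R := R) (u.right k) • (1 : H)) ⊗ₜ[R]
          T.lact (antipode (R := R) (u.left k) ⊗ₜ[R] y) := by
        refine Finset.sum_congr rfl fun k _ => ?_
        rw [← TensorProduct.sum_tmul, sum_antipode_mul_eq_smul (w k)]
    _ = (1 : H) ⊗ₜ[R] T.lact (antipode (R := R) a ⊗ₜ[R] y) := by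
        calc ∑ k ∈ u.index, (Coalgebra.counit (R := R) (u.right k) • (1 : H)) ⊗ₜ[R]
              T.lact (antipode (R := R) (u.left k) ⊗ₜ[R] y)
            = ∑ k ∈ u.index, (1 : H) ⊗ₜ[R]
                T.lact (antipode (R := R)
                  (Coalgebra.counit (R := R) (u.right k) • u.left k) ⊗ₜ[R] y) := by
              refine Finset.sum_congr rfl fun k _ => ?_
              rw [TensorProduct.smul_tmul, map_smul, ← TensorProduct.smul_tmul', map_smul]
          _ = (1 : H) ⊗ₜ[R] T.lact (antipode (R := R) a ⊗ₜ[R] y) := by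
              rw [← TensorProduct.tmul_sum]
              congr 1
              rw [← map_sum, ← TensorProduct.sum_tmul, ← map_sum, sum_counit_smul_right u]

lemma Pi_coinv (x : X) :
    T.lcoact (T.lact ((LinearMap.rTensor X (Sm R H)) (T.lcoact x))) =
      (1 : H) ⊗ₜ[R] T.lact ((LinearMap.rTensor X (Sm R H)) (T.lcoact x)) := by
  obtain ⟨s, hs⟩ := TensorProduct.exists_finset (T.lcoact x)
  set t : H × X → Finset (H × X) :=
    fun p => (TensorProduct.exists_finset (T.lcoact p.2)).choose with htdef
  have ht : ∀ p ∈ s, T.lcoact p.2 = ∑ q ∈ t p, q.1 ⊗ₜ[R] q.2 :=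
    fun p _ => (TensorProduct.exists_finset (T.lcoact p.2)).choose_spec
  set u : (p : H × X) → Coalgebra.Repr R p.1 (H × H) := fun p => ℛ R p.1 with hu
  have key := congrArg (ThetaOp T) (hopf_coassoc_pt T x s hs t ht u)
  rw [map_sum, map_sum] at key
  have lhs : ∑ p ∈ s, (ThetaOp T) (∑ k ∈ (u p).index,
        (u p).left k ⊗ₜ[R] ((u p).right k ⊗ₜ[R] p.2)) =
      (1 : H) ⊗ₜ[R] T.lact ((LinearMap.rTensor X (Sm R H)) (T.lcoact x)) := by
    calc ∑ p ∈ s, (ThetaOp T) (∑ k ∈ (u p).index,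
          (u p).left k ⊗ₜ[R] ((u p).right k ⊗ₜ[R] p.2))
        = ∑ p ∈ s, (1 : H) ⊗ₜ[R] T.lact (antipode (R := R) p.1 ⊗ₜ[R] p.2) := by
          refine Finset.sum_congr rfl fun p _ => ?_
          rw [map_sum (ThetaOp T) (fun k => (u p).left k ⊗ₜ[R] ((u p).right k ⊗ₜ[R] p.2))
            (u p).index, ThetaOp_reduce T p.1 p.2 (u p)]
      _ = (1 : H) ⊗ₜ[R] T.lact ((LinearMap.rTensor X (Sm R H)) (T.lcoact x)) := by
          rw [← TensorProduct.tmul_sum, ← Pi_pt T x s hs]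
  have rhs : ∑ p ∈ s, (ThetaOp T) (∑ q ∈ t p, p.1 ⊗ₜ[R] (q.1 ⊗ₜ[R] q.2)) =
      T.lcoact (T.lact ((LinearMap.rTensor X (Sm R H)) (T.lcoact x))) := by
    rw [hs, map_sum (LinearMap.rTensor X (Sm R H)) _ s, map_sum T.lact _ s,
      map_sum T.lcoact _ s]
    refine Finset.sum_congr rfl fun p hp => ?_
    rw [LinearMap.rTensor_tmul, Sm_eq,
      compat_pt T (antipode (R := R) p.1) p.2 (antipodeRepr (u p)) (t p) (ht p hp),
      map_sum (ThetaOp T) (fun q => p.1 ⊗ₜ[R] (q.1 ⊗ₜ[R] q.2)) (t p)]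
    have swap : ∀ q ∈ t p, ThetaOp T (p.1 ⊗ₜ[R] (q.1 ⊗ₜ[R] q.2)) =
        ∑ k ∈ (u p).index, (antipode (R := R) ((u p).right k) * q.1) ⊗ₜ[R]
          T.lact (antipode (R := R) ((u p).left k) ⊗ₜ[R] q.2) :=
      fun q _ => ThetaOp_pt T p.1 q.1 q.2 (u p)
    rw [Finset.sum_congr rfl swap, Finset.sum_comm]
    rfl
  rw [lhs, rhs] at key
  exact key.symm

end PiCoinv

section MoreLemmas
variable {R : Type u} [CommRing R] {H : Type u} [Ring H] [HopfAlgebra R H]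
variable {X : Type u} [AddCommGroup X] [Module R X] (T : HopfMod R H X)

lemma act_coinv_eps (g : H) (x : X) (hx : T.lcoact x = (1 : H) ⊗ₜ[R] x) :
    T.lact ((LinearMap.rTensor X (Sm R H)) (T.lcoact (T.lact (g ⊗ₜ[R] x)))) =
      Coalgebra.counit (R := R) g • x := by
  set r := ℛ R g with hr
  rw [coinv_compat T g x hx r, map_sum, map_sum]
  simp only [LinearMap.rTensor_tmul, Sm_eq]
  calc ∑ i ∈ r.index, T.lact (antipode (R := R) (r.left i) ⊗ₜ[R] T.lact (r.right i ⊗ₜ[R] x))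
      = ∑ i ∈ r.index, T.lact ((antipode (R := R) (r.left i) * r.right i) ⊗ₜ[R] x) := by
        exact Finset.sum_congr rfl fun i _ => (T.mul_lact _ _ _).symm
    _ = T.lact ((∑ i ∈ r.index, antipode (R := R) (r.left i) * r.right i) ⊗ₜ[R] x) := by
        rw [TensorProduct.sum_tmul, map_sum]
    _ = Coalgebra.counit (R := R) g • x := by
        rw [sum_antipode_mul_eq_smul r, ← TensorProduct.smul_tmul', map_smul, T.one_lact]

lemma PhiPsi (x : X) :
    T.lact ((LinearMap.lTensor H
      (T.lact ∘ₗ LinearMap.rTensor X (Sm R H) ∘ₗ T.lcoact)) (T.lcoact x)) = x := by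
  obtain ⟨s, hs⟩ := TensorProduct.exists_finset (T.lcoact x)
  set t : H × X → Finset (H × X) :=
    fun p => (TensorProduct.exists_finset (T.lcoact p.2)).choose with htdef
  have ht : ∀ p ∈ s, T.lcoact p.2 = ∑ q ∈ t p, q.1 ⊗ₜ[R] q.2 :=
    fun p _ => (TensorProduct.exists_finset (T.lcoact p.2)).choose_spec
  set u : (p : H × X) → Coalgebra.Repr R p.1 (H × H) := fun p => ℛ R p.1 with hu
  set L : H ⊗[R] (H ⊗[R] X) →ₗ[R] X := T.lact ∘ₗ
    LinearMap.rTensor X (LinearMap.mul' R H ∘ₗ LinearMap.lTensor H (antipode (R := R))) ∘ₗ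
    (TensorProduct.assoc R H H X).symm.toLinearMap with hL
  have Lpt : ∀ (a b : H) (y : X), L (a ⊗ₜ[R] (b ⊗ₜ[R] y)) =
      T.lact ((a * antipode (R := R) b) ⊗ₜ[R] y) := by
    intro a b y
    simp only [hL, LinearMap.comp_apply, LinearEquiv.coe_coe, TensorProduct.assoc_symm_tmul,
      LinearMap.rTensor_tmul, LinearMap.lTensor_tmul, LinearMap.mul'_apply]
  have key := congrArg L (hopf_coassoc_pt T x s hs t ht u)
  rw [map_sum, map_sum] at key
  have lhs : ∑ p ∈ s, L (∑ k ∈ (u p).index,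
      (u p).left k ⊗ₜ[R] ((u p).right k ⊗ₜ[R] p.2)) = x := by
    calc ∑ p ∈ s, L (∑ k ∈ (u p).index, (u p).left k ⊗ₜ[R] ((u p).right k ⊗ₜ[R] p.2))
        = ∑ p ∈ s, T.lact ((∑ k ∈ (u p).index,
            (u p).left k * antipode (R := R) ((u p).right k)) ⊗ₜ[R] p.2) := by
          refine Finset.sum_congr rfl fun p _ => ?_
          rw [map_sum L _ (u p).index, TensorProduct.sum_tmul, map_sum]
          exact Finset.sum_congr rfl fun k _ => Lpt _ _ _
      _ = ∑ p ∈ s, Coalgebra.counit (R := R) p.1 • p.2 := by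
          refine Finset.sum_congr rfl fun p _ => ?_
          rw [sum_mul_antipode_eq_smul (u p), ← TensorProduct.smul_tmul', map_smul, T.one_lact]
      _ = x := counit_pt T x s hs
  have rhs : ∑ p ∈ s, L (∑ q ∈ t p, p.1 ⊗ₜ[R] (q.1 ⊗ₜ[R] q.2)) =
      T.lact ((LinearMap.lTensor H
        (T.lact ∘ₗ LinearMap.rTensor X (Sm R H) ∘ₗ T.lcoact)) (T.lcoact x)) := by
    rw [hs, map_sum (LinearMap.lTensor H _) _ s, map_sum T.lact _ s]
    refine Finset.sum_congr rfl fun p hp => ?_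
    rw [map_sum L _ (t p), LinearMap.lTensor_tmul]
    calc ∑ q ∈ t p, L (p.1 ⊗ₜ[R] (q.1 ⊗ₜ[R] q.2))
        = ∑ q ∈ t p, T.lact (p.1 ⊗ₜ[R] T.lact (antipode (R := R) q.1 ⊗ₜ[R] q.2)) := by
          refine Finset.sum_congr rfl fun q _ => ?_
          rw [Lpt, T.mul_lact]
      _ = T.lact (p.1 ⊗ₜ[R] ((T.lact ∘ₗ LinearMap.rTensor X (Sm R H) ∘ₗ T.lcoact) p.2)) := by
          rw [LinearMap.comp_apply, LinearMap.comp_apply, Pi_pt T p.2 (t p) (ht p hp),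
            TensorProduct.tmul_sum, map_sum]
  rw [lhs, rhs] at key
  exact key.symm
end MoreLemmas


end AuxFTHM

set_option synthInstance.maxHeartbeats 400000

/-- Fundamental theorem of Hopf modules. For a left-left Hopf module `X` over a Hopf
algebra `H`, the map `Π(x) = S(x₍₋₁₎)·x₍₀₎` is an idempotent endomorphism of `X` whose
image lies in the coinvariants `Xᶜᵒ = {x : δ(x) = 1 ⊗ x}`, and the multiplication map
`H ⊗ Xᶜᵒ → X`, `h ⊗ x ↦ h·x`, is an isomorphism of Hopf modules. -/
theorem stmt7 (R : Type u) [CommRing R] (H : Type u) [Ring H] [HopfAlgebra R H]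
    (X : Type u) [AddCommGroup X] [Module R X] (T : HopfMod R H X) :
    let Pi : X →ₗ[R] X := T.lact ∘ₗ LinearMap.rTensor X (Sm R H) ∘ₗ T.lcoact
    let coinv : Submodule R X := LinearMap.ker (T.lcoact - TensorProduct.mk R H X 1)
    let Φ : H ⊗[R] ↥coinv →ₗ[R] X := T.lact ∘ₗ LinearMap.lTensor H coinv.subtype
    -- `Π` is idempotent with image in the coinvariants
    Pi ∘ₗ Pi = Pi ∧ (∀ x : X, Pi x ∈ coinv) ∧
    -- the multiplication map is bijective
    Function.Bijective Φ ∧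
    -- and a morphism of `H`-modules (`H ⊗ Xᶜᵒ` with the action by left multiplication)
    Φ ∘ₗ (LinearMap.rTensor (↥coinv) (mm R H) ∘ₗ
        (TensorProduct.assoc R H H (↥coinv)).symm.toLinearMap) =
      T.lact ∘ₗ LinearMap.lTensor H Φ ∧
    -- and a morphism of `H`-comodules (`H ⊗ Xᶜᵒ` with the coaction `Δ ⊗ id`)
    T.lcoact ∘ₗ Φ =
      LinearMap.lTensor H Φ ∘ₗ (TensorProduct.assoc R H H (↥coinv)).toLinearMap ∘ₗ
        LinearMap.rTensor (↥coinv) (Δm R H) := by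
  intro Pi coinv Φ
  have Pi_apply : ∀ x : X, Pi x = T.lact ((LinearMap.rTensor X (Sm R H)) (T.lcoact x)) :=
    fun x => rfl
  have hmem : ∀ x : X, Pi x ∈ coinv := by
    intro x
    rw [LinearMap.mem_ker, LinearMap.sub_apply, sub_eq_zero, Pi_apply, Pi_coinv T x]
    rfl
  have hcoinv : ∀ c : ↥coinv, T.lcoact c.1 = (1 : H) ⊗ₜ[R] c.1 := by
    intro c
    have := c.2
    rw [LinearMap.mem_ker, LinearMap.sub_apply, sub_eq_zero] at this
    exact this
  have Φ_apply : ∀ (h : H) (c : ↥coinv), Φ (h ⊗ₜ[R] c) = T.lact (h ⊗ₜ[R] c.1) := by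
    intro h c
    simp only [Φ, LinearMap.comp_apply, LinearMap.lTensor_tmul, Submodule.coe_subtype]
  have hidem : Pi ∘ₗ Pi = Pi := by
    refine LinearMap.ext fun x => ?_
    rw [LinearMap.comp_apply, Pi_apply (Pi x), Pi_apply, Pi_coinv T x,
      LinearMap.rTensor_tmul, Sm_eq, antipode_one', T.one_lact]
  refine ⟨hidem, hmem, ?_, ?_, ?_⟩
  · -- bijectivity
    set Pi' : X →ₗ[R] ↥coinv := LinearMap.codRestrict coinv Pi hmem with hPi'
    set Ψ : X →ₗ[R] H ⊗[R] ↥coinv := LinearMap.lTensor H Pi' ∘ₗ T.lcoact with hΨ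
    have hright : ∀ x : X, Φ (Ψ x) = x := by
      intro x
      have : Φ (Ψ x) = T.lact ((LinearMap.lTensor H Pi) (T.lcoact x)) := by
        simp only [hΨ, Φ, LinearMap.comp_apply]
        rw [← LinearMap.comp_apply (LinearMap.lTensor H coinv.subtype),
          ← LinearMap.lTensor_comp, LinearMap.subtype_comp_codRestrict]
      rw [this]
      exact PhiPsi T x
    have hleft : ∀ z : H ⊗[R] ↥coinv, Ψ (Φ z) = z := by
      have : Ψ ∘ₗ Φ = LinearMap.id := by
        refine TensorProduct.ext' fun h c => ?_
        rw [LinearMap.comp_apply, Φ_apply, LinearMap.id_apply]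
        set r := Coalgebra.Repr.arbitrary R h with hr
        simp only [hΨ, LinearMap.comp_apply]
        rw [coinv_compat T h c.1 (hcoinv c) r, map_sum]
        have step : ∀ i ∈ r.index,
            (LinearMap.lTensor H Pi') (r.left i ⊗ₜ[R] T.lact (r.right i ⊗ₜ[R] c.1)) =
              (Coalgebra.counit (R := R) (r.right i) • r.left i) ⊗ₜ[R] c := by
          intro i _
          rw [LinearMap.lTensor_tmul]
          have : Pi' (T.lact (r.right i ⊗ₜ[R] c.1)) =
              Coalgebra.counit (R := R) (r.right i) • c := by
            apply Subtype.ext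
            rw [LinearMap.codRestrict_apply, Pi_apply, SetLike.val_smul]
            exact act_coinv_eps T (r.right i) c.1 (hcoinv c)
          rw [this, TensorProduct.tmul_smul, TensorProduct.smul_tmul']
        rw [Finset.sum_congr rfl step, ← TensorProduct.sum_tmul, sum_counit_smul_right r]
      exact fun z => congr($this z)
    exact Function.bijective_iff_has_inverse.mpr ⟨Ψ, hleft, hright⟩
  · -- module morphism
    refine TensorProduct.ext (LinearMap.ext fun g => TensorProduct.ext' fun h c => ?_)
    simp only [LinearMap.compr₂ₛₗ_apply, TensorProduct.mk_apply, LinearMap.comp_apply,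
      LinearEquiv.coe_coe, TensorProduct.assoc_symm_tmul, LinearMap.rTensor_tmul,
      LinearMap.lTensor_tmul, mm_eq, LinearMap.mul'_apply]
    rw [Φ_apply, Φ_apply, T.mul_lact]
  · -- comodule morphism
    refine TensorProduct.ext' fun h c => ?_
    have lhs : (T.lcoact ∘ₗ Φ) (h ⊗ₜ[R] c) =
        ∑ i ∈ (Coalgebra.Repr.arbitrary R h).index, (Coalgebra.Repr.arbitrary R h).left i ⊗ₜ[R] T.lact ((Coalgebra.Repr.arbitrary R h).right i ⊗ₜ[R] c.1) := by
      rw [LinearMap.comp_apply, Φ_apply]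
      exact coinv_compat T h c.1 (hcoinv c) (Coalgebra.Repr.arbitrary R h)
    rw [lhs]
    simp only [LinearMap.comp_apply, LinearEquiv.coe_coe, LinearMap.rTensor_tmul, Δm_eq]
    rw [← (Coalgebra.Repr.arbitrary R h).eq, TensorProduct.sum_tmul]
    simp only [map_sum, TensorProduct.assoc_tmul, LinearMap.lTensor_tmul]
    refine Finset.sum_congr rfl fun i _ => ?_
    rw [Φ_apply]
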